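/- Under the same setup, if the incidence weighting estimator θ̂ = Σ_{(i,κ) ∈ H} δ_i W_{iκ} y_κ / π_i is unbiased for θ = Σ_{κ ∈ Ω} y_κ, then its variance equals Σ_{κ ∈ Ω} Σ_{ℓ ∈ Ω} (Δ_{κℓ} − 1) y_κ y_ℓ, where Δ_{κℓ} = Σ_{i ∈ β_κ} Σ_{j ∈ β_ℓ} (π_{ij} / (π_i π_j)) E[W_{iκ} W_{jℓ} | δ_i δ_j = 1] and π_{ij} = P(δ_i δ_j = 1). -/

import Mathlib

open Finset
open scoped Classical BigOperators

lemma sum_H_eq {F Ω : Type*} [Fintype F] [Fintype Ω] (H : Finset (F × Ω))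
    (g : F × Ω → ℝ) :
    ∑ e ∈ H, g e = ∑ κ, ∑ i ∈ univ.filter (fun i => (i, κ) ∈ H), g (i, κ) := by
  classical
  rw [show H = (univ ×ˢ univ).filter (fun e : F × Ω => e ∈ H) by ext e; simp]
  rw [Finset.sum_filter, Finset.sum_product_right]
  simp [Finset.sum_filter]

/-- Variance of an unbiased incidence weighting estimator (Proposition 2). -/
theorem stmt_1
    {F Ω Ω₀ : Type*} [Fintype F] [Fintype Ω] [Fintype Ω₀]
    (P : Ω₀ → ℝ) (hP : ∀ ω, 0 ≤ P ω) (hP1 : ∑ ω, P ω = 1)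
    (s : Ω₀ → Finset F) (H : Finset (F × Ω)) (y : Ω → ℝ)
    (π : F → ℝ)
    (hπ : ∀ i, π i = ∑ ω, if i ∈ s ω then P ω else 0)
    (hπpos : ∀ i, 0 < π i)
    (πij : F → F → ℝ)
    (hπij : ∀ i j, πij i j = ∑ ω, if i ∈ s ω ∧ j ∈ s ω then P ω else 0)
    (hπijpos : ∀ i j, 0 < πij i j)
    (W : Ω₀ → F → Ω → ℝ)
    (hW0 : ∀ ω i κ, i ∉ s ω → W ω i κ = 0)
    (hunbias : ∀ κ : Ω,
      ∑ i ∈ univ.filter (fun i => (i, κ) ∈ H),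
        (∑ ω, if i ∈ s ω then P ω * W ω i κ else 0) / π i = 1)
    (hunb : ∑ ω, P ω *
        (∑ e ∈ H, (if e.1 ∈ s ω then (1 : ℝ) else 0) * W ω e.1 e.2 * y e.2 / π e.1)
      = ∑ κ, y κ) :
    ∑ ω, P ω *
        ((∑ e ∈ H, (if e.1 ∈ s ω then (1 : ℝ) else 0) * W ω e.1 e.2 * y e.2 / π e.1)
          - ∑ κ, y κ) ^ 2
      = ∑ κ, ∑ ℓ,
          ((∑ i ∈ univ.filter (fun i => (i, κ) ∈ H),
              ∑ j ∈ univ.filter (fun j => (j, ℓ) ∈ H),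
                (πij i j / (π i * π j)) *
                  ((∑ ω, if i ∈ s ω ∧ j ∈ s ω then P ω * W ω i κ * W ω j ℓ else 0)
                    / πij i j)) - 1) * y κ * y ℓ := by
  classical
  set θ := ∑ κ, y κ with hθ
  set X : Ω₀ → ℝ := fun ω =>
    ∑ e ∈ H, (if e.1 ∈ s ω then (1 : ℝ) else 0) * W ω e.1 e.2 * y e.2 / π e.1 with hX
  -- simplify each Δ term
  have key : ∀ (i j : F) (κ ℓ : Ω),
      (πij i j / (π i * π j)) *
        ((∑ ω, if i ∈ s ω ∧ j ∈ s ω then P ω * W ω i κ * W ω j ℓ else 0) / πij i j)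
      = (∑ ω, if i ∈ s ω ∧ j ∈ s ω then P ω * W ω i κ * W ω j ℓ else 0) / (π i * π j) := by
    intro i j κ ℓ
    have h : πij i j ≠ 0 := (hπijpos i j).ne'
    rw [div_mul_div_comm, mul_comm (πij i j), mul_comm (π i * π j) (πij i j),
      mul_comm _ (πij i j), mul_div_mul_left _ _ h]
  -- the summand over pairs of H-elements
  set G : F × Ω → F × Ω → ℝ := fun e f =>
    (∑ ω, if e.1 ∈ s ω ∧ f.1 ∈ s ω then P ω * W ω e.1 e.2 * W ω f.1 f.2 else 0)
      / (π e.1 * π f.1) * y e.2 * y f.2 with hG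
  -- core identity: second moment
  have hcore : ∑ ω, P ω * X ω ^ 2
      = ∑ κ, ∑ ℓ,
          (∑ i ∈ univ.filter (fun i => (i, κ) ∈ H),
            ∑ j ∈ univ.filter (fun j => (j, ℓ) ∈ H),
              (∑ ω, if i ∈ s ω ∧ j ∈ s ω then P ω * W ω i κ * W ω j ℓ else 0)
                / (π i * π j)) * y κ * y ℓ := by
    have step1 : ∀ ω, P ω * X ω ^ 2
        = ∑ e ∈ H, ∑ f ∈ H,
            P ω * (((if e.1 ∈ s ω then (1 : ℝ) else 0) * W ω e.1 e.2 * y e.2 / π e.1)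
              * ((if f.1 ∈ s ω then (1 : ℝ) else 0) * W ω f.1 f.2 * y f.2 / π f.1)) := by
      intro ω
      rw [hX, sq, Finset.sum_mul_sum, Finset.mul_sum]
      exact Finset.sum_congr rfl fun e _ => by rw [Finset.mul_sum]
    have step2 : ∑ ω, P ω * X ω ^ 2 = ∑ e ∈ H, ∑ f ∈ H, G e f := by
      rw [Finset.sum_congr rfl fun ω _ => step1 ω, Finset.sum_comm]
      refine Finset.sum_congr rfl fun e _ => ?_
      rw [Finset.sum_comm]
      refine Finset.sum_congr rfl fun f _ => ?_
      rw [hG]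
      simp only
      rw [Finset.sum_div, Finset.sum_mul, Finset.sum_mul]
      refine Finset.sum_congr rfl fun ω _ => ?_
      by_cases h1 : e.1 ∈ s ω
      · by_cases h2 : f.1 ∈ s ω
        · simp only [h1, h2, if_pos, and_self, if_true]
          ring
        · simp [h1, h2, hW0 ω f.1 f.2 h2]
      · simp [h1, hW0 ω e.1 e.2 h1]
    rw [step2]
    rw [sum_H_eq H (fun e => ∑ f ∈ H, G e f)]
    refine Finset.sum_congr rfl fun κ _ => ?_
    rw [Finset.sum_congr rfl fun i (_ : i ∈ univ.filter (fun i => (i, κ) ∈ H)) =>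
      sum_H_eq H (fun f => G (i, κ) f), Finset.sum_comm]
    refine Finset.sum_congr rfl fun ℓ _ => ?_
    rw [Finset.sum_mul, Finset.sum_mul]
    refine Finset.sum_congr rfl fun i _ => ?_
    rw [Finset.sum_mul, Finset.sum_mul]
  -- expand LHS: variance = second moment - θ²
  have hPX : ∑ ω, P ω * X ω = θ := hunb
  have hLHS : ∑ ω, P ω * (X ω - θ) ^ 2 = (∑ ω, P ω * X ω ^ 2) - θ ^ 2 := by
    have : ∀ ω, P ω * (X ω - θ) ^ 2
        = P ω * X ω ^ 2 - 2 * θ * (P ω * X ω) + θ ^ 2 * P ω := by intro ω; ring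
    rw [Finset.sum_congr rfl fun ω _ => this ω, Finset.sum_add_distrib,
      Finset.sum_sub_distrib, ← Finset.mul_sum, ← Finset.mul_sum, hPX, hP1]
    ring
  -- expand RHS
  have hθ2 : ∑ κ, ∑ ℓ, y κ * y ℓ = θ ^ 2 := by
    rw [hθ, sq, Finset.sum_mul_sum]
  calc ∑ ω, P ω * (X ω - θ) ^ 2 = (∑ ω, P ω * X ω ^ 2) - θ ^ 2 := hLHS
    _ = ∑ κ, ∑ ℓ,
          ((∑ i ∈ univ.filter (fun i => (i, κ) ∈ H),
              ∑ j ∈ univ.filter (fun j => (j, ℓ) ∈ H),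
                (πij i j / (π i * π j)) *
                  ((∑ ω, if i ∈ s ω ∧ j ∈ s ω then P ω * W ω i κ * W ω j ℓ else 0)
                    / πij i j)) - 1) * y κ * y ℓ := by
        have expand : ∀ κ ℓ : Ω,
            ((∑ i ∈ univ.filter (fun i => (i, κ) ∈ H),
                ∑ j ∈ univ.filter (fun j => (j, ℓ) ∈ H),
                  (πij i j / (π i * π j)) *
                    ((∑ ω, if i ∈ s ω ∧ j ∈ s ω then P ω * W ω i κ * W ω j ℓ else 0)
                      / πij i j)) - 1) * y κ * y ℓ
            = (∑ i ∈ univ.filter (fun i => (i, κ) ∈ H),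
                ∑ j ∈ univ.filter (fun j => (j, ℓ) ∈ H),
                  (∑ ω, if i ∈ s ω ∧ j ∈ s ω then P ω * W ω i κ * W ω j ℓ else 0)
                    / (π i * π j)) * y κ * y ℓ - y κ * y ℓ := by
          intro κ ℓ
          simp only [key]
          ring
        rw [Finset.sum_congr rfl fun κ _ => Finset.sum_congr rfl fun ℓ _ => expand κ ℓ]
        rw [Finset.sum_congr rfl fun κ (_ : κ ∈ univ) => Finset.sum_sub_distrib _ _,
          Finset.sum_sub_distrib, hθ2, hcore]
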